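/- Let u : ℝ_{≥0} → ℝ_{≥0} be nonincreasing and positive, let x_1,…,x_n span ℂ^N, and let Ĉ = (1/n) Σ_{i=1}^n u(d_i) x_i x_i* where d_i = (1/N) x_i* Ĉ^{-1} x_i, with d_1 ≤ … ≤ d_n. Let Ŝ = (1/n) Σ_i x_i x_i* and φ(s) = s u(s). Then φ(d_n) ≤ (1/N) x_n* Ŝ^{-1} x_n and φ(d_1) ≥ (1/N) x_1* Ŝ^{-1} x_1. Consequently, if φ is nondecreasing, for every i: (1/N) x_1* Ŝ^{-1} x_1 ≤ φ(d_i) ≤ (1/N) x_n* Ŝ^{-1} x_n. -/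

import Mathlib

open Matrix Finset
open scoped ComplexOrder

namespace Stmt12Aux

open scoped MatrixOrder


variable {N : ℕ}

lemma posdef_conj {B S : Matrix (Fin N) (Fin N) ℂ} (hB : B.PosDef)
    (hSh : S.IsHermitian) (hS : IsUnit S) : (S * B * S).PosDef := by
  refine Matrix.PosDef.of_dotProduct_mulVec_pos ?_ ?_
  · show (S * B * S)ᴴ = S * B * S
    simp [Matrix.conjTranspose_mul, hSh.eq, hB.1.eq, Matrix.mul_assoc]
  · intro y hy
    have hy' : S.mulVec y ≠ 0 := by
      intro hc
      apply hy
      have hinj := Matrix.mulVec_injective_iff_isUnit.mpr hS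
      have : S.mulVec y = S.mulVec 0 := by simpa [Matrix.mulVec_zero] using hc
      exact hinj this
    have h2 := hB.dotProduct_mulVec_pos hy'
    have key : star y ⬝ᵥ (S * B * S).mulVec y
        = star (S.mulVec y) ⬝ᵥ B.mulVec (S.mulVec y) := by
      rw [← Matrix.mulVec_mulVec, ← Matrix.mulVec_mulVec, Matrix.dotProduct_mulVec,
        Matrix.star_mulVec, hSh.eq]
    rw [key]
    exact h2

lemma sqrt_isUnit {A : Matrix (Fin N) (Fin N) ℂ} (hA : A.PosDef) :
    IsUnit (CFC.sqrt A) := by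
  have h2 : CFC.sqrt A * CFC.sqrt A = A := CFC.sqrt_mul_sqrt_self A hA.posSemidef.nonneg
  have hU : IsUnit A := hA.isUnit
  rw [← h2, Matrix.isUnit_iff_isUnit_det, Matrix.det_mul] at hU
  rw [Matrix.isUnit_iff_isUnit_det]
  exact isUnit_of_mul_isUnit_left hU

/-- Inverse is antitone on positive definite matrices. -/
lemma inv_sub_inv_psd {A B : Matrix (Fin N) (Fin N) ℂ}
    (hA : A.PosDef) (hB : B.PosDef) (h : (B - A).PosSemidef) :
    (A⁻¹ - B⁻¹).PosSemidef := by
  set S := CFC.sqrt A⁻¹ with hSdef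
  have hS2 : S * S = A⁻¹ := CFC.sqrt_mul_sqrt_self _ hA.inv.posSemidef.nonneg
  have hSh : S.IsHermitian := (Matrix.nonneg_iff_posSemidef.mp (CFC.sqrt_nonneg _)).1
  have hSU : IsUnit S := sqrt_isUnit hA.inv
  have hSd : IsUnit S.det := (Matrix.isUnit_iff_isUnit_det _).mp hSU
  have hAd : IsUnit A.det := (Matrix.isUnit_iff_isUnit_det _).mp hA.isUnit
  have hA_eq : A = S⁻¹ * S⁻¹ := by
    rw [← Matrix.mul_inv_rev, hS2, Matrix.nonsing_inv_nonsing_inv _ hAd]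
  have hSAS : S * A * S = 1 := by
    rw [hA_eq, Matrix.mul_assoc, Matrix.mul_assoc, Matrix.nonsing_inv_mul _ hSd,
      Matrix.mul_one, Matrix.mul_nonsing_inv _ hSd]
  set M := S * B * S with hMdef
  have hM : M.PosDef := posdef_conj hB hSh hSU
  have hMd : IsUnit M.det := (Matrix.isUnit_iff_isUnit_det _).mp hM.isUnit
  have hM1 : (M - 1).PosSemidef := by
    have h' := h.mul_mul_conjTranspose_same S
    rw [hSh.eq] at h'
    have e : S * (B - A) * S = M - 1 := by
      rw [Matrix.mul_sub, Matrix.sub_mul, hSAS]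
    rwa [e] at h'
  set T := CFC.sqrt M⁻¹ with hTdef
  have hT2 : T * T = M⁻¹ := CFC.sqrt_mul_sqrt_self _ hM.inv.posSemidef.nonneg
  have hTh : T.IsHermitian := (Matrix.nonneg_iff_posSemidef.mp (CFC.sqrt_nonneg _)).1
  have hTU : IsUnit T := sqrt_isUnit hM.inv
  have hTd : IsUnit T.det := (Matrix.isUnit_iff_isUnit_det _).mp hTU
  have hM_eq : M = T⁻¹ * T⁻¹ := by
    rw [← Matrix.mul_inv_rev, hT2, Matrix.nonsing_inv_nonsing_inv _ hMd]
  have hTMT : T * M * T = 1 := by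
    rw [hM_eq, Matrix.mul_assoc, Matrix.mul_assoc, Matrix.nonsing_inv_mul _ hTd,
      Matrix.mul_one, Matrix.mul_nonsing_inv _ hTd]
  have h1M : (1 - M⁻¹).PosSemidef := by
    have h' := hM1.mul_mul_conjTranspose_same T
    rw [hTh.eq] at h'
    have e : T * (M - 1) * T = 1 - M⁻¹ := by
      rw [Matrix.mul_sub, Matrix.sub_mul, hTMT, Matrix.mul_one, hT2]
    rwa [e] at h'
  have hMinv : S * M⁻¹ * S = B⁻¹ := by
    rw [hMdef, Matrix.mul_inv_rev, Matrix.mul_inv_rev]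
    rw [← Matrix.mul_assoc, ← Matrix.mul_assoc, Matrix.mul_nonsing_inv _ hSd,
      Matrix.one_mul, Matrix.mul_assoc, Matrix.nonsing_inv_mul _ hSd, Matrix.mul_one]
  have h' := h1M.mul_mul_conjTranspose_same S
  rw [hSh.eq] at h'
  have e : S * (1 - M⁻¹) * S = A⁻¹ - B⁻¹ := by
    rw [Matrix.mul_sub, Matrix.sub_mul, Matrix.mul_one, hS2, hMinv]
  rwa [e] at h'



variable {N : ℕ}

lemma psd_vmv (v : Fin N → ℂ) : (vecMulVec v (star v)).PosSemidef := by
  rw [Matrix.vecMulVec_eq (Fin 1), ← Matrix.conjTranspose_replicateCol]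
  exact Matrix.posSemidef_self_mul_conjTranspose _

lemma psd_smul {M : Matrix (Fin N) (Fin N) ℂ} (hM : M.PosSemidef) {r : ℝ} (hr : 0 ≤ r) :
    ((r : ℂ) • M).PosSemidef := by
  refine Matrix.PosSemidef.of_dotProduct_mulVec_nonneg ?_ ?_
  · show ((r : ℂ) • M)ᴴ = _
    rw [Matrix.conjTranspose_smul, hM.1.eq]
    norm_num
  · intro y
    have h := hM.dotProduct_mulVec_nonneg y
    rw [Matrix.smul_mulVec, dotProduct_smul, smul_eq_mul]
    rw [Complex.le_def] at h ⊢
    constructor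
    · simp only [Complex.zero_re, Complex.mul_re, Complex.ofReal_re, Complex.ofReal_im,
        zero_mul, zero_sub] at h ⊢
      simpa using mul_nonneg hr h.1
    · simp only [Complex.zero_im, Complex.mul_im, Complex.ofReal_re, Complex.ofReal_im,
        zero_mul, add_zero] at h ⊢
      rw [← h.2]
      ring

lemma psd_sum {m : ℕ} (w : Fin m → ℝ) (hw : ∀ i, 0 ≤ w i) (x : Fin m → Fin N → ℂ) :
    (∑ i, (w i : ℂ) • vecMulVec (x i) (star (x i))).PosSemidef := by
  classical
  exact Finset.sum_induction _ _ (fun a b ha hb => ha.add hb) Matrix.PosSemidef.zero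
    (fun i _ => psd_smul (psd_vmv _) (hw i))

lemma posdef_smul {M : Matrix (Fin N) (Fin N) ℂ} (hM : M.PosDef) {r : ℝ} (hr : 0 < r) :
    ((r : ℂ) • M).PosDef := by
  refine Matrix.PosDef.of_dotProduct_mulVec_pos ?_ ?_
  · show ((r : ℂ) • M)ᴴ = _
    rw [Matrix.conjTranspose_smul, hM.1.eq]
    norm_num
  · intro y hy
    have h := hM.dotProduct_mulVec_pos hy
    rw [Matrix.smul_mulVec, dotProduct_smul, smul_eq_mul]
    rw [Complex.lt_def] at h ⊢
    constructor
    · simp only [Complex.zero_re, Complex.mul_re, Complex.ofReal_re, Complex.ofReal_im,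
        zero_mul, zero_sub] at h ⊢
      simpa using mul_pos hr h.1
    · simp only [Complex.zero_im, Complex.mul_im, Complex.ofReal_re, Complex.ofReal_im,
        zero_mul, add_zero] at h ⊢
      rw [← h.2]
      ring

lemma inv_smul_eq {S : Matrix (Fin N) (Fin N) ℂ} (hS : S.PosDef) {c : ℝ} (hc : 0 < c) :
    ((c : ℂ) • S)⁻¹ = ((c : ℂ))⁻¹ • S⁻¹ := by
  have hSd : IsUnit S.det := (Matrix.isUnit_iff_isUnit_det _).mp hS.isUnit
  apply Matrix.inv_eq_right_inv
  rw [Matrix.smul_mul, Matrix.mul_smul, smul_smul,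
    mul_inv_cancel₀ (by exact_mod_cast hc.ne' : (c : ℂ) ≠ 0),
    Matrix.mul_nonsing_inv _ hSd, one_smul]


lemma key_le {N : ℕ} {A B : Matrix (Fin N) (Fin N) ℂ}
    (hA : A.PosDef) (hB : B.PosDef) (h : (B - A).PosSemidef) (v : Fin N → ℂ) :
    (star v ⬝ᵥ B⁻¹.mulVec v).re ≤ (star v ⬝ᵥ A⁻¹.mulVec v).re := by
  have h2 := (inv_sub_inv_psd hA hB h).dotProduct_mulVec_nonneg v
  rw [Matrix.sub_mulVec, dotProduct_sub, Complex.le_def] at h2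
  have := h2.1
  simp only [Complex.zero_re, Complex.sub_re] at this
  linarith

end Stmt12Aux

theorem stmt_12 {N n : ℕ} (hN : 0 < N)
    (u : ℝ → ℝ) (hu_mono : ∀ s t, 0 ≤ s → s ≤ t → u t ≤ u s)
    (hu_pos : ∀ s, 0 ≤ s → 0 < u s)
    (x : Fin (n + 1) → Fin N → ℂ)
    (C S : Matrix (Fin N) (Fin N) ℂ) (hC : C.PosDef) (hS : S.PosDef)
    (d : Fin (n + 1) → ℝ)
    (hd : ∀ i, d i = (1 / (N : ℝ)) * (star (x i) ⬝ᵥ C⁻¹.mulVec (x i)).re)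
    (hd_sorted : Monotone d) (hd_nonneg : ∀ i, 0 ≤ d i)
    (hCdef : C = (1 / ((n : ℂ) + 1)) • ∑ i, (u (d i) : ℂ) • Matrix.vecMulVec (x i) (star (x i)))
    (hSdef : S = (1 / ((n : ℂ) + 1)) • ∑ i, Matrix.vecMulVec (x i) (star (x i))) :
    d (Fin.last n) * u (d (Fin.last n))
        ≤ (1 / (N : ℝ)) * (star (x (Fin.last n)) ⬝ᵥ S⁻¹.mulVec (x (Fin.last n))).re ∧
      (1 / (N : ℝ)) * (star (x 0) ⬝ᵥ S⁻¹.mulVec (x 0)).re ≤ d 0 * u (d 0) ∧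
      ((∀ s t, 0 ≤ s → s ≤ t → s * u s ≤ t * u t) → ∀ i,
        (1 / (N : ℝ)) * (star (x 0) ⬝ᵥ S⁻¹.mulVec (x 0)).re ≤ d i * u (d i) ∧
          d i * u (d i)
            ≤ (1 / (N : ℝ)) * (star (x (Fin.last n)) ⬝ᵥ S⁻¹.mulVec (x (Fin.last n))).re) := by
  have hcast : (1 / ((n : ℂ) + 1)) = ((1 / ((n : ℝ) + 1) : ℝ) : ℂ) := by push_cast; ring
  have combo : ∀ (a : Fin (n + 1) → ℝ), (∀ i, 0 ≤ a i) →
      ((1 / ((n : ℂ) + 1)) • ∑ i, (a i : ℂ) • Matrix.vecMulVec (x i) (star (x i))).PosSemidef := by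
    intro a ha
    rw [hcast]
    exact Stmt12Aux.psd_smul (Stmt12Aux.psd_sum a ha x) (by positivity)
  -- part 1
  have hc : 0 < u (d (Fin.last n)) := hu_pos _ (hd_nonneg _)
  have diff1 : C - ((u (d (Fin.last n)) : ℝ) : ℂ) • S
      = (1 / ((n : ℂ) + 1)) • ∑ i,
          ((u (d i) - u (d (Fin.last n)) : ℝ) : ℂ) • Matrix.vecMulVec (x i) (star (x i)) := by
    rw [hCdef, hSdef, smul_comm, ← smul_sub, Finset.smul_sum, ← Finset.sum_sub_distrib]
    congr 1
    refine Finset.sum_congr rfl fun i _ => ?_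
    push_cast
    rw [sub_smul]
  have hpsd1 : (C - ((u (d (Fin.last n)) : ℝ) : ℂ) • S).PosSemidef := by
    rw [diff1]
    exact combo _ fun i => sub_nonneg.mpr
      (hu_mono _ _ (hd_nonneg i) (hd_sorted (Fin.le_last i)))
  have hcS : (((u (d (Fin.last n)) : ℝ) : ℂ) • S).PosDef := Stmt12Aux.posdef_smul hS hc
  have h1 := Stmt12Aux.key_le hcS hC hpsd1 (x (Fin.last n))
  rw [Stmt12Aux.inv_smul_eq hS hc, Matrix.smul_mulVec, dotProduct_smul,
    smul_eq_mul, ← Complex.ofReal_inv, Complex.re_ofReal_mul] at h1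
  have h3 : u (d (Fin.last n)) * (star (x (Fin.last n)) ⬝ᵥ C⁻¹.mulVec (x (Fin.last n))).re
      ≤ (star (x (Fin.last n)) ⬝ᵥ S⁻¹.mulVec (x (Fin.last n))).re := by
    have h4 := mul_le_mul_of_nonneg_left h1 hc.le
    rwa [← mul_assoc, mul_inv_cancel₀ hc.ne', one_mul] at h4
  have part1 : d (Fin.last n) * u (d (Fin.last n))
      ≤ (1 / (N : ℝ)) * (star (x (Fin.last n)) ⬝ᵥ S⁻¹.mulVec (x (Fin.last n))).re := by
    have e1 : d (Fin.last n) * u (d (Fin.last n))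
        = (1 / (N : ℝ) * (star (x (Fin.last n)) ⬝ᵥ C⁻¹.mulVec (x (Fin.last n))).re)
            * u (d (Fin.last n)) := by rw [← hd (Fin.last n)]
    rw [e1]
    nlinarith [mul_le_mul_of_nonneg_left h3 (show (0:ℝ) ≤ 1 / (N : ℝ) by positivity)]
  -- part 2
  have hc0 : 0 < u (d 0) := hu_pos _ (hd_nonneg _)
  have diff2 : ((u (d 0) : ℝ) : ℂ) • S - C
      = (1 / ((n : ℂ) + 1)) • ∑ i,
          ((u (d 0) - u (d i) : ℝ) : ℂ) • Matrix.vecMulVec (x i) (star (x i)) := by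
    rw [hCdef, hSdef, smul_comm, ← smul_sub, Finset.smul_sum, ← Finset.sum_sub_distrib]
    congr 1
    refine Finset.sum_congr rfl fun i _ => ?_
    push_cast
    rw [sub_smul]
  have hpsd2 : (((u (d 0) : ℝ) : ℂ) • S - C).PosSemidef := by
    rw [diff2]
    exact combo _ fun i => sub_nonneg.mpr
      (hu_mono _ _ (hd_nonneg 0) (hd_sorted (Fin.zero_le i)))
  have hc0S : (((u (d 0) : ℝ) : ℂ) • S).PosDef := Stmt12Aux.posdef_smul hS hc0
  have h1' := Stmt12Aux.key_le hC hc0S hpsd2 (x 0)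
  rw [Stmt12Aux.inv_smul_eq hS hc0, Matrix.smul_mulVec, dotProduct_smul,
    smul_eq_mul, ← Complex.ofReal_inv, Complex.re_ofReal_mul] at h1'
  have h3' : (star (x 0) ⬝ᵥ S⁻¹.mulVec (x 0)).re
      ≤ u (d 0) * (star (x 0) ⬝ᵥ C⁻¹.mulVec (x 0)).re := by
    have h4 := mul_le_mul_of_nonneg_left h1' hc0.le
    rwa [← mul_assoc, mul_inv_cancel₀ hc0.ne', one_mul] at h4
  have part2 : (1 / (N : ℝ)) * (star (x 0) ⬝ᵥ S⁻¹.mulVec (x 0)).re ≤ d 0 * u (d 0) := by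
    have e2 : d 0 * u (d 0)
        = (1 / (N : ℝ) * (star (x 0) ⬝ᵥ C⁻¹.mulVec (x 0)).re) * u (d 0) := by rw [← hd 0]
    rw [e2]
    nlinarith [mul_le_mul_of_nonneg_left h3' (show (0:ℝ) ≤ 1 / (N : ℝ) by positivity)]
  refine ⟨part1, part2, fun hphi i => ⟨?_, ?_⟩⟩
  · exact le_trans part2 (hphi _ _ (hd_nonneg 0) (hd_sorted (Fin.zero_le i)))
  · exact le_trans (hphi _ _ (hd_nonneg i) (hd_sorted (Fin.le_last i))) part1
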